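/- Let A be an n×n real symmetric positive semidefinite matrix with eigenvalues λ₁ ≥ ⋯ ≥ λ_n and orthonormal eigenvectors v₁, …, v_n, let 1 ≤ ℓ < n, and let ⌊A⌋_ℓ = ∑_{j=1}^{ℓ} λ_j v_j v_jᵀ be a best rank-ℓ approximation of A obtained by truncating its eigendecomposition. Then for every μ > 0, ‖(⌊A⌋_ℓ + μI)⁻¹ − (A + μI)⁻¹‖ = λ_{ℓ+1} / (μ·(λ_{ℓ+1} + μ)); in particular, the general bound ‖(Â + μI)⁻¹ − (A + μI)⁻¹‖ ≤ (1/μ)·‖A−Â‖/(‖A−Â‖+μ) is attained when Â = ⌊A⌋_ℓ. -/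

import Mathlib

open Matrix MeasureTheory ProbabilityTheory
open scoped Classical

/-- Moore–Penrose pseudoinverse (characterized by the four Penrose conditions). -/
noncomputable def pinv {m n : ℕ} (A : Matrix (Fin m) (Fin n) ℝ) : Matrix (Fin n) (Fin m) ℝ :=
  if h : ∃ B : Matrix (Fin n) (Fin m) ℝ,
      A * B * A = A ∧ B * A * B = B ∧ (A * B)ᵀ = A * B ∧ (B * A)ᵀ = B * A
  then h.choose else 0

/-- Nyström approximation of `A` with respect to the test matrix `X`. -/
noncomputable def nystrom {n l : ℕ} (A : Matrix (Fin n) (Fin n) ℝ)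
    (X : Matrix (Fin n) (Fin l) ℝ) : Matrix (Fin n) (Fin n) ℝ :=
  A * X * pinv (Xᵀ * A * X) * (A * X)ᵀ

/-- Spectral (ℓ² operator) norm of a matrix. -/
noncomputable def specNorm {m n : ℕ} (M : Matrix (Fin m) (Fin n) ℝ) : ℝ :=
  ‖LinearMap.toContinuousLinearMap (Matrix.toEuclideanLin M)‖

/-- Frobenius norm of a matrix. -/
noncomputable def frobNorm {m n : ℕ} (M : Matrix (Fin m) (Fin n) ℝ) : ℝ :=
  Real.sqrt (∑ i, ∑ j, (M i j) ^ 2)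

/-- Euclidean norm of a vector. -/
noncomputable def euclNorm {n : ℕ} (x : Fin n → ℝ) : ℝ :=
  Real.sqrt (∑ i, (x i) ^ 2)

/-- Law of an `n × l` random matrix with independent standard normal entries. -/
noncomputable def gaussianEnsemble (n l : ℕ) : Measure (Fin n → Fin l → ℝ) :=
  Measure.pi fun _ => Measure.pi fun _ => gaussianReal 0 1

/-- The psd square root of a psd matrix (junk value `0` otherwise). -/
noncomputable def matSqrt {n : ℕ} (M : Matrix (Fin n) (Fin n) ℝ) : Matrix (Fin n) (Fin n) ℝ :=
  if hM : M.PosSemidef then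
    (hM.1.eigenvectorUnitary : Matrix (Fin n) (Fin n) ℝ) * diagonal (Real.sqrt ∘ hM.1.eigenvalues)
      * (star hM.1.eigenvectorUnitary : Matrix (Fin n) (Fin n) ℝ)
  else 0

/-- ℓ² condition number of a symmetric matrix: ratio of the largest to the smallest
eigenvalue (junk value `0` for non-symmetric matrices). -/
noncomputable def kappa {n : ℕ} (M : Matrix (Fin n) (Fin n) ℝ) : ℝ :=
  if hM : M.IsHermitian then (⨆ i, hM.eigenvalues i) / (⨅ i, hM.eigenvalues i) else 0

lemma eucl_symm_norm {m : ℕ} (y : Fin m → ℝ) :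
    ‖(WithLp.equiv 2 (Fin m → ℝ)).symm y‖ = Real.sqrt (∑ i, y i ^ 2) := by
  simp [EuclideanSpace.norm_eq, Real.norm_eq_abs, sq_abs]

lemma sum_sq_mulVec {n : ℕ} {V : Matrix (Fin n) (Fin n) ℝ} (hV : Vᵀ * V = 1)
    (z : Fin n → ℝ) : ∑ i, (V *ᵥ z) i ^ 2 = ∑ i, z i ^ 2 := by
  have h : (V *ᵥ z) ⬝ᵥ (V *ᵥ z) = z ⬝ᵥ z := by
    rw [Matrix.dotProduct_mulVec, ← Matrix.mulVec_transpose, Matrix.mulVec_mulVec, hV,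
      Matrix.one_mulVec]
  simpa [dotProduct, pow_two] using h

lemma specNorm_conj_diagonal {n : ℕ} (V : Matrix (Fin n) (Fin n) ℝ) (hV : Vᵀ * V = 1)
    (f : Fin n → ℝ) (i0 : Fin n) (hmax : ∀ j, |f j| ≤ f i0) :
    specNorm (V * Matrix.diagonal f * Vᵀ) = f i0 := by
  have hVVt : V * Vᵀ = 1 := mul_eq_one_comm.mp hV
  have hVt : (Vᵀ)ᵀ * Vᵀ = 1 := by rw [Matrix.transpose_transpose]; exact hVVt
  have hf0 : 0 ≤ f i0 := le_trans (abs_nonneg _) (hmax i0)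
  set T := LinearMap.toContinuousLinearMap
    (Matrix.toEuclideanLin (V * Matrix.diagonal f * Vᵀ)) with hT
  have hTapp : ∀ x : EuclideanSpace ℝ (Fin n),
      T x = (WithLp.equiv 2 (Fin n → ℝ)).symm
        ((V * Matrix.diagonal f * Vᵀ) *ᵥ (WithLp.equiv 2 (Fin n → ℝ)) x) := by
    intro x
    rw [hT, LinearMap.coe_toContinuousLinearMap', Matrix.toEuclideanLin_apply]
    rfl
  refine le_antisymm (ContinuousLinearMap.opNorm_le_bound _ hf0 ?_) ?_
  · intro x
    set x' := (WithLp.equiv 2 (Fin n → ℝ)) x with hx'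
    set y := Vᵀ *ᵥ x' with hy
    have hrw : (V * Matrix.diagonal f * Vᵀ) *ᵥ x' = V *ᵥ (Matrix.diagonal f *ᵥ y) := by
      rw [hy, Matrix.mulVec_mulVec, Matrix.mulVec_mulVec]
    have hxn : ‖x‖ = Real.sqrt (∑ i, x' i ^ 2) := by
      have : x = (WithLp.equiv 2 (Fin n → ℝ)).symm x' := by simp [hx']
      rw [this, eucl_symm_norm]
    have hTx : ‖T x‖ = Real.sqrt (∑ i, (f i * y i) ^ 2) := by
      rw [hTapp, hrw, eucl_symm_norm, sum_sq_mulVec hV]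
      congr 1
      refine Finset.sum_congr rfl fun i _ => ?_
      rw [Matrix.mulVec_diagonal]
    have hsum : ∑ i, (f i * y i) ^ 2 ≤ (f i0) ^ 2 * ∑ i, x' i ^ 2 := by
      rw [← sum_sq_mulVec hVt x', ← hy, Finset.mul_sum]
      refine Finset.sum_le_sum fun i _ => ?_
      rw [mul_pow]
      have : f i ^ 2 ≤ f i0 ^ 2 := by
        rw [← sq_abs (f i)]
        exact pow_le_pow_left₀ (abs_nonneg _) (hmax i) 2
      exact mul_le_mul_of_nonneg_right this (sq_nonneg _)
    rw [hTx, hxn]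
    calc Real.sqrt (∑ i, (f i * y i) ^ 2) ≤ Real.sqrt ((f i0) ^ 2 * ∑ i, x' i ^ 2) :=
          Real.sqrt_le_sqrt hsum
      _ = f i0 * Real.sqrt (∑ i, x' i ^ 2) := by
          rw [Real.sqrt_mul (sq_nonneg _), Real.sqrt_sq hf0]
  · set e : Fin n → ℝ := Pi.single i0 1 with he
    set x0 : EuclideanSpace ℝ (Fin n) := (WithLp.equiv 2 (Fin n → ℝ)).symm (V *ᵥ e) with hx0
    have hesum : ∑ i, e i ^ 2 = 1 := by
      rw [he]
      rw [Finset.sum_eq_single i0]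
      · simp
      · intro b _ hb; simp [Pi.single_apply, hb]
      · simp
    have hx0n : ‖x0‖ = 1 := by
      rw [hx0, eucl_symm_norm, sum_sq_mulVec hV, hesum, Real.sqrt_one]
    have hde : Matrix.diagonal f *ᵥ e = f i0 • e := by
      funext i
      rw [Matrix.mulVec_diagonal]
      by_cases h : i = i0
      · subst h; simp [he]
      · simp [he, Pi.single_apply, h]
    have hTx0 : T x0 = f i0 • x0 := by
      rw [hTapp, hx0]
      have h1 : (WithLp.equiv 2 (Fin n → ℝ)) ((WithLp.equiv 2 (Fin n → ℝ)).symm (V *ᵥ e))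
          = V *ᵥ e := Equiv.apply_symm_apply _ _
      rw [h1]
      have h2 : (V * Matrix.diagonal f * Vᵀ) *ᵥ (V *ᵥ e) = f i0 • (V *ᵥ e) := by
        rw [Matrix.mulVec_mulVec, Matrix.mul_assoc, Matrix.mul_assoc, hV, Matrix.mul_one,
          ← Matrix.mulVec_mulVec, hde, Matrix.mulVec_smul]
      rw [h2]
      rfl
    have := T.le_opNorm x0
    rw [hTx0, hx0n, mul_one, norm_smul, hx0n, mul_one, Real.norm_eq_abs,
      abs_of_nonneg hf0] at this
    exact this

/-- The regularized-inverse bound is attained by the best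
rank-`ℓ` approximation `⌊A⌋_ℓ = ∑_{j≤ℓ} λ_j v_j v_jᵀ` obtained by
truncating the eigendecomposition:
`‖(⌊A⌋_ℓ+μI)⁻¹ − (A+μI)⁻¹‖ = λ_{ℓ+1}/(μ(λ_{ℓ+1}+μ))`. -/
theorem regularized_inverse_bound_attained {n : ℕ}
    (A : Matrix (Fin n) (Fin n) ℝ) (hA : A.PosSemidef)
    (lam : Fin n → ℝ) (hanti : Antitone lam)
    (V : Matrix (Fin n) (Fin n) ℝ) (hV : Vᵀ * V = 1)
    (hdecomp : A = V * Matrix.diagonal lam * Vᵀ)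
    (l : ℕ) (hl1 : 1 ≤ l) (hln : l < n)
    (μ : ℝ) (hμ : 0 < μ) :
    specNorm ((V * Matrix.diagonal (fun j : Fin n => if (j : ℕ) < l then lam j else 0) * Vᵀ
          + μ • (1 : Matrix (Fin n) (Fin n) ℝ))⁻¹
        - (A + μ • (1 : Matrix (Fin n) (Fin n) ℝ))⁻¹)
      = lam ⟨l, hln⟩ / (μ * (lam ⟨l, hln⟩ + μ)) := by
  classical
  have hVVt : V * Vᵀ = 1 := mul_eq_one_comm.mp hV
  -- eigenvalues nonnegative
  have hdiagA : Matrix.diagonal lam = Vᵀ * A * V := by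
    rw [hdecomp]
    simp only [Matrix.mul_assoc]
    rw [hV, Matrix.mul_one, ← Matrix.mul_assoc, hV, Matrix.one_mul]
  have hpsdD : (Matrix.diagonal lam).PosSemidef := by
    rw [hdiagA]
    have := hA.conjTranspose_mul_mul_same V
    rwa [Matrix.conjTranspose_eq_transpose_of_trivial] at this
  have hlam : ∀ j, 0 ≤ lam j := Matrix.posSemidef_diagonal_iff.mp hpsdD
  -- the key inversion formula
  have key : ∀ g : Fin n → ℝ, (∀ j, 0 < g j + μ) →
      (V * Matrix.diagonal g * Vᵀ + μ • (1 : Matrix (Fin n) (Fin n) ℝ))⁻¹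
        = V * Matrix.diagonal (fun j => (g j + μ)⁻¹) * Vᵀ := by
    intro g hg
    have h0 : Matrix.diagonal (fun j => g j + μ) =
        Matrix.diagonal g + μ • (1 : Matrix (Fin n) (Fin n) ℝ) := by
      ext i j
      by_cases h : i = j <;> simp [Matrix.diagonal_apply, Matrix.one_apply, h]
    have h1 : V * Matrix.diagonal g * Vᵀ + μ • (1 : Matrix (Fin n) (Fin n) ℝ)
        = V * Matrix.diagonal (fun j => g j + μ) * Vᵀ := by
      rw [h0, Matrix.mul_add, Matrix.add_mul, Matrix.mul_smul, Matrix.mul_one,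
        Matrix.smul_mul, hVVt]
    have hdinv : (Matrix.diagonal fun j => g j + μ)⁻¹
        = Matrix.diagonal fun j => (g j + μ)⁻¹ := by
      refine Matrix.inv_eq_right_inv ?_
      rw [Matrix.diagonal_mul_diagonal]
      have : (fun j => (g j + μ) * (g j + μ)⁻¹) = fun _ => (1 : ℝ) := by
        funext j
        exact mul_inv_cancel₀ (ne_of_gt (hg j))
      rw [this, Matrix.diagonal_one]
    rw [h1, Matrix.mul_inv_rev, Matrix.mul_inv_rev,
      Matrix.inv_eq_left_inv hV, Matrix.inv_eq_right_inv hV, hdinv, ← Matrix.mul_assoc]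
  have hgd : ∀ j : Fin n, 0 < (if (j : ℕ) < l then lam j else 0) + μ := by
    intro j
    by_cases h : (j : ℕ) < l <;> simp [h] <;> [skip; exact hμ]
    have := hlam j; linarith
  have hglam : ∀ j, 0 < lam j + μ := fun j => by have := hlam j; linarith
  set d : Fin n → ℝ := fun j : Fin n => if (j : ℕ) < l then lam j else 0 with hd
  set f : Fin n → ℝ := fun j => (d j + μ)⁻¹ - (lam j + μ)⁻¹ with hf
  have hdiff : (V * Matrix.diagonal d * Vᵀ + μ • (1 : Matrix (Fin n) (Fin n) ℝ))⁻¹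
      - (A + μ • (1 : Matrix (Fin n) (Fin n) ℝ))⁻¹ = V * Matrix.diagonal f * Vᵀ := by
    rw [hdecomp, key d hgd, key lam hglam, ← Matrix.sub_mul, ← Matrix.mul_sub, ← Matrix.diagonal_sub]
  set i0 : Fin n := ⟨l, hln⟩ with hi0
  have hd_i0 : d i0 = 0 := by simp [hd, hi0]
  -- bounds on f
  have hfnonneg : ∀ j, 0 ≤ f j := by
    intro j
    have hdle : d j ≤ lam j := by
      rw [hd]; by_cases h : (j : ℕ) < l <;> simp [h, hlam j]
    have h1 : 0 < d j + μ := by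
      have : 0 ≤ d j := by rw [hd]; by_cases h : (j : ℕ) < l <;> simp [h, hlam j]
      linarith
    have h2 : (lam j + μ)⁻¹ ≤ (d j + μ)⁻¹ :=
      inv_anti₀ h1 (by linarith : d j + μ ≤ lam j + μ)
    simp only [hf]
    linarith
  have hmax : ∀ j, |f j| ≤ f i0 := by
    intro j
    rw [abs_of_nonneg (hfnonneg j)]
    by_cases h : (j : ℕ) < l
    · have : f j = 0 := by simp [hf, hd, h]
      rw [this]; exact hfnonneg i0
    · have hji : lam j ≤ lam i0 := by
        refine hanti ?_
        rw [Fin.le_def]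
        simpa [hi0] using not_lt.mp h
      have hdj : d j = 0 := by simp [hd, h]
      simp only [hf, hdj, hd_i0]
      have h2 : 0 < lam j + μ := by have := hlam j; linarith
      have h3 : (lam i0 + μ)⁻¹ ≤ (lam j + μ)⁻¹ :=
        inv_anti₀ h2 (by linarith : lam j + μ ≤ lam i0 + μ)
      linarith
  rw [hdiff, specNorm_conj_diagonal V hV f i0 hmax]
  have h1 : 0 < lam i0 + μ := by have := hlam i0; linarith
  simp only [hf, hd_i0, zero_add]
  field_simp
  ring
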